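/- Let G₀ be a finitely generated group and let {G_ℓ}_{ℓ≥0} and {H_ℓ}_{ℓ≥0} be group chains in G₀ with H₀ = G₀. Let G_∞ = lim←{G₀/G_{ℓ+1} → G₀/G_ℓ} and H_∞ = lim←{G₀/H_{ℓ+1} → G₀/H_ℓ} with the left G₀-actions by coordinatewise multiplication. Then the chains {G_ℓ} and {H_ℓ} are conjugate equivalent — i.e. there exists a sequence (g_ℓ)_{ℓ≥0} in G₀ with g_ℓ G_ℓ = g_{ℓ+1} G_ℓ for all ℓ ≥ 0 such that the chains {g_ℓ G_ℓ g_ℓ⁻¹}_{ℓ≥0} and {H_ℓ}_{ℓ≥0} are equivalent — if and only if there exists a G₀-equivariant homeomorphism τ : G_∞ → H_∞ (not required to preserve basepoints). -/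

import Mathlib

/-!
Molino theory for matchbox manifolds (Dyer–Hurder–Lukina), Theorem 4.4(2)
(after Fokkink–Oversteegen): two group chains are conjugate equivalent if and only if
there is an equivariant homeomorphism of their inverse limits.
-/


variable {Γ : Type*} [Group Γ]

/-- Discrete topology on each coset space `Γ ⧸ H` (the coset spaces occurring below are
finite, since the subgroups have finite index). -/
instance cosetSpaceTopology (H : Subgroup Γ) : TopologicalSpace (Γ ⧸ H) := ⊥

/-- The natural map of coset spaces `Γ ⧸ H → Γ ⧸ K` for `H ≤ K`. -/
def cosetMap (H K : Subgroup Γ) (h : H ≤ K) : Γ ⧸ H → Γ ⧸ K :=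
  Quotient.map' id fun a b hab => by
    rw [QuotientGroup.leftRel_apply] at hab ⊢
    exact h hab

/-- The inverse limit `G_∞ = lim← Γ/G_ℓ` of the coset spaces of a group chain,
as the subspace of compatible sequences in `Π_ℓ Γ/G_ℓ`. -/
def InvLimSet (G : ℕ → Subgroup Γ) (hG : ∀ ℓ, G (ℓ + 1) ≤ G ℓ) :
    Set (∀ ℓ : ℕ, Γ ⧸ G ℓ) :=
  { x | ∀ ℓ, cosetMap (G (ℓ + 1)) (G ℓ) (hG ℓ) (x (ℓ + 1)) = x ℓ }

theorem cosetMap_smul (H K : Subgroup Γ) (h : H ≤ K) (g : Γ) (q : Γ ⧸ H) :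
    cosetMap H K h (g • q) = g • cosetMap H K h q := by
  induction q using Quotient.inductionOn' with
  | h a => rfl

/-- The coordinatewise left action of `Γ` on the inverse limit `lim← Γ/G_ℓ`. -/
def limSMul (G : ℕ → Subgroup Γ) (hG : ∀ ℓ, G (ℓ + 1) ≤ G ℓ) (g : Γ)
    (x : ↥(InvLimSet G hG)) : ↥(InvLimSet G hG) :=
  ⟨fun ℓ => g • x.1 ℓ, fun ℓ => by
    rw [cosetMap_smul, x.2 ℓ]⟩

/-- The basepoint `(e G_ℓ)_ℓ` of the inverse limit. -/
def basePt (G : ℕ → Subgroup Γ) (hG : ∀ ℓ, G (ℓ + 1) ≤ G ℓ) : ↥(InvLimSet G hG) :=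
  ⟨fun _ => QuotientGroup.mk 1, fun _ => rfl⟩

/-- Two group chains `{G_ℓ}` and `{H_ℓ}` are equivalent if they admit interleaved
subsequences: there are strictly increasing `(ℓ_k)`, `(j_k)` with
`G_{ℓ_0} ⊇ H_{j_0} ⊇ G_{ℓ_1} ⊇ H_{j_1} ⊇ ⋯`. -/
def ChainEquiv (G H : ℕ → Subgroup Γ) : Prop :=
  ∃ l j : ℕ → ℕ, StrictMono l ∧ StrictMono j ∧
    (∀ k, H (j k) ≤ G (l k)) ∧ (∀ k, G (l (k + 1)) ≤ H (j k))

/-- The conjugate subgroup `g K g⁻¹`. -/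
def conjSub {Γ : Type*} [Group Γ] (g : Γ) (K : Subgroup Γ) : Subgroup Γ :=
  K.map (MulAut.conj g).toMonoidHom

instance (H : Subgroup Γ) : DiscreteTopology (Γ ⧸ H) := ⟨rfl⟩

lemma cosetMap_mk' (H K : Subgroup Γ) (h : H ≤ K) (a : Γ) :
    cosetMap H K h (QuotientGroup.mk a) = QuotientGroup.mk a := rfl

lemma cosetMap_comp (H K L : Subgroup Γ) (h1 : H ≤ K) (h2 : K ≤ L) (h3 : H ≤ L) (q : Γ ⧸ H) :
    cosetMap K L h2 (cosetMap H K h1 q) = cosetMap H L h3 q := by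
  induction q using Quotient.inductionOn' with
  | h a => rfl

lemma mem_conjSub {g a : Γ} {K : Subgroup Γ} :
    a ∈ conjSub g K ↔ g⁻¹ * a * g ∈ K := by
  constructor
  · rintro ⟨k, hk, rfl⟩
    simpa [MulAut.conj_apply, mul_assoc] using hk
  · intro h
    exact ⟨_, h, by simp [MulAut.conj_apply]; group⟩

lemma chain_antitone (G : ℕ → Subgroup Γ) (hG : ∀ ℓ, G (ℓ + 1) ≤ G ℓ) : Antitone G :=
  antitone_nat_of_succ_le hG

lemma invLim_coord (G : ℕ → Subgroup Γ) (hG : ∀ ℓ, G (ℓ + 1) ≤ G ℓ)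
    (x : ↥(InvLimSet G hG)) {i ℓ : ℕ} (h : i ≤ ℓ) (hle : G ℓ ≤ G i) :
    cosetMap (G ℓ) (G i) hle (x.1 ℓ) = x.1 i := by
  have self : ∀ (K : Subgroup Γ) (hk : K ≤ K) (q : Γ ⧸ K), cosetMap K K hk q = q := by
    intro K hk q
    induction q using Quotient.inductionOn' with
    | h a => rfl
  induction h with
  | refl => exact self _ _ _
  | @step n hn ih =>
    calc cosetMap (G (n + 1)) (G i) _ (x.1 (n + 1))
        = cosetMap (G n) (G i) (chain_antitone G hG hn) (cosetMap (G (n + 1)) (G n) (hG n) (x.1 (n + 1))) :=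
          (cosetMap_comp _ _ _ _ _ _ _).symm
      _ = cosetMap (G n) (G i) (chain_antitone G hG hn) (x.1 n) := by rw [x.2 n]
      _ = x.1 i := ih _

lemma coord_eq_of_le (G : ℕ → Subgroup Γ) (hG : ∀ ℓ, G (ℓ + 1) ≤ G ℓ)
    (x z : ↥(InvLimSet G hG)) {i ℓ : ℕ} (h : i ≤ ℓ) (hz : z.1 ℓ = x.1 ℓ) :
    z.1 i = x.1 i := by
  rw [← invLim_coord G hG z h (chain_antitone G hG h),
      ← invLim_coord G hG x h (chain_antitone G hG h), hz]

lemma continuous_coord (G : ℕ → Subgroup Γ) (hG : ∀ ℓ, G (ℓ + 1) ≤ G ℓ) (ℓ : ℕ) :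
    Continuous fun x : ↥(InvLimSet G hG) => x.1 ℓ :=
  (continuous_apply ℓ).comp continuous_subtype_val

/-- Cylinder neighborhoods form a basis. -/
lemma exists_basic_subset (G : ℕ → Subgroup Γ) (hG : ∀ ℓ, G (ℓ + 1) ≤ G ℓ)
    (x : ↥(InvLimSet G hG)) (U : Set ↥(InvLimSet G hG)) (hU : IsOpen U) (hx : x ∈ U) :
    ∃ ℓ, ∀ z : ↥(InvLimSet G hG), z.1 ℓ = x.1 ℓ → z ∈ U := by
  obtain ⟨V, hV, rfl⟩ := isOpen_induced_iff.mp hU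
  obtain ⟨I, u, hu, hsub⟩ := isOpen_pi_iff.mp hV x.1 hx
  refine ⟨I.sup id, fun z hz => ?_⟩
  apply hsub
  intro i hi
  have : z.1 i = x.1 i := coord_eq_of_le G hG x z (Finset.le_sup (f := id) hi) hz
  rw [this]
  exact (hu i hi).2

def IsEqv (A : ℕ → Subgroup Γ) (hA : ∀ ℓ, A (ℓ + 1) ≤ A ℓ)
    (B : ℕ → Subgroup Γ) (hB : ∀ ℓ, B (ℓ + 1) ≤ B ℓ)
    (φ : ↥(InvLimSet A hA) → ↥(InvLimSet B hB)) : Prop :=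
  ∀ g x, φ (limSMul A hA g x) = limSMul B hB g (φ x)

lemma cont_coordwise (A B : ℕ → Subgroup Γ) (hA : ∀ ℓ, A (ℓ + 1) ≤ A ℓ)
    (hB : ∀ ℓ, B (ℓ + 1) ≤ B ℓ) (φ : ↥(InvLimSet A hA) → ↥(InvLimSet B hB))
    (r : ℕ → ℕ) (f : ∀ m, Γ ⧸ A (r m) → Γ ⧸ B m)
    (hφ : ∀ x m, (φ x).1 m = f m (x.1 (r m))) : Continuous φ := by
  rw [continuous_induced_rng]
  apply continuous_pi
  intro m
  have h : (fun x : ↥(InvLimSet A hA) => (φ x).1 m) = fun x => f m (x.1 (r m)) :=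
    funext fun x => hφ x m
  show Continuous fun x : ↥(InvLimSet A hA) => (φ x).1 m
  rw [h]
  exact (continuous_of_discreteTopology).comp (continuous_coord A hA (r m))

lemma exists_homeo_of_inverse (A B : ℕ → Subgroup Γ) (hA : ∀ ℓ, A (ℓ + 1) ≤ A ℓ)
    (hB : ∀ ℓ, B (ℓ + 1) ≤ B ℓ)
    (φ : ↥(InvLimSet A hA) → ↥(InvLimSet B hB)) (ψ : ↥(InvLimSet B hB) → ↥(InvLimSet A hA))
    (hφc : Continuous φ) (hψc : Continuous ψ) (hφe : IsEqv A hA B hB φ)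
    (h1 : ∀ x, ψ (φ x) = x) (h2 : ∀ y, φ (ψ y) = y) :
    ∃ τ : ↥(InvLimSet A hA) ≃ₜ ↥(InvLimSet B hB),
      ∀ g x, τ (limSMul A hA g x) = limSMul B hB g (τ x) :=
  ⟨⟨⟨φ, ψ, h1, h2⟩, hφc, hψc⟩, hφe⟩

/-- cumulative max, made monotone and ≥ id -/
def monoMax (r : ℕ → ℕ) : ℕ → ℕ
  | 0 => max (r 0) 0
  | m + 1 => max (max (monoMax r m + 1) (r (m + 1))) (m + 1)

lemma monoMax_strictMono (r : ℕ → ℕ) : StrictMono (monoMax r) :=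
  strictMono_nat_of_lt_succ fun n => by
    simp [monoMax]

lemma le_monoMax (r : ℕ → ℕ) (m : ℕ) : r m ≤ monoMax r m := by
  cases m <;> simp [monoMax]

lemma self_le_monoMax (r : ℕ → ℕ) (m : ℕ) : m ≤ monoMax r m := by
  cases m <;> simp [monoMax]

/-- The coordinatewise map between inverse limits induced by a cofinal comparison. -/
def chainMap (A B : ℕ → Subgroup Γ) (hA : ∀ ℓ, A (ℓ + 1) ≤ A ℓ)
    (hB : ∀ ℓ, B (ℓ + 1) ≤ B ℓ) (r : ℕ → ℕ) (hr : Monotone r)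
    (hAB : ∀ m, A (r m) ≤ B m) (x : ↥(InvLimSet A hA)) : ↥(InvLimSet B hB) :=
  ⟨fun m => cosetMap (A (r m)) (B m) (hAB m) (x.1 (r m)), by
    intro m
    have h1 : A (r (m + 1)) ≤ A (r m) := chain_antitone A hA (hr (Nat.le_succ m))
    calc cosetMap (B (m + 1)) (B m) (hB m)
          (cosetMap (A (r (m + 1))) (B (m + 1)) (hAB (m + 1)) (x.1 (r (m + 1))))
        = cosetMap (A (r (m + 1))) (B m) (h1.trans (hAB m)) (x.1 (r (m + 1))) :=
          cosetMap_comp _ _ _ _ _ _ _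
      _ = cosetMap (A (r m)) (B m) (hAB m)
            (cosetMap (A (r (m + 1))) (A (r m)) h1 (x.1 (r (m + 1)))) :=
          (cosetMap_comp _ _ _ _ _ _ _).symm
      _ = cosetMap (A (r m)) (B m) (hAB m) (x.1 (r m)) := by
          rw [invLim_coord A hA x (hr (Nat.le_succ m)) h1]⟩

lemma chainMap_eqv (A B : ℕ → Subgroup Γ) (hA : ∀ ℓ, A (ℓ + 1) ≤ A ℓ)
    (hB : ∀ ℓ, B (ℓ + 1) ≤ B ℓ) (r : ℕ → ℕ) (hr : Monotone r)
    (hAB : ∀ m, A (r m) ≤ B m) : IsEqv A hA B hB (chainMap A B hA hB r hr hAB) := by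
  intro g x
  apply Subtype.ext
  funext m
  show cosetMap (A (r m)) (B m) (hAB m) (g • x.1 (r m)) = g • cosetMap (A (r m)) (B m) (hAB m) (x.1 (r m))
  exact cosetMap_smul _ _ _ _ _

/-- Mutually cofinal chains have equivariantly homeomorphic inverse limits. -/
lemma homeo_of_mutually_cofinal (A B : ℕ → Subgroup Γ) (hA : ∀ ℓ, A (ℓ + 1) ≤ A ℓ)
    (hB : ∀ ℓ, B (ℓ + 1) ≤ B ℓ)
    (h1 : ∀ m, ∃ n, A n ≤ B m) (h2 : ∀ m, ∃ n, B n ≤ A m) :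
    ∃ τ : ↥(InvLimSet A hA) ≃ₜ ↥(InvLimSet B hB),
      ∀ g x, τ (limSMul A hA g x) = limSMul B hB g (τ x) := by
  choose r0 hr0 using h1
  choose s0 hs0 using h2
  set r := monoMax r0 with hrdef
  set s := monoMax s0 with hsdef
  have hrm : Monotone r := (monoMax_strictMono r0).monotone
  have hsm : Monotone s := (monoMax_strictMono s0).monotone
  have hAB : ∀ m, A (r m) ≤ B m := fun m =>
    (chain_antitone A hA (le_monoMax r0 m)).trans (hr0 m)
  have hBA : ∀ m, B (s m) ≤ A m := fun m =>
    (chain_antitone B hB (le_monoMax s0 m)).trans (hs0 m)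
  refine exists_homeo_of_inverse A B hA hB
    (chainMap A B hA hB r hrm hAB) (chainMap B A hB hA s hsm hBA)
    (cont_coordwise A B hA hB _ r _ (fun x m => rfl))
    (cont_coordwise B A hB hA _ s _ (fun x m => rfl))
    (chainMap_eqv A B hA hB r hrm hAB) ?_ ?_
  · intro x
    apply Subtype.ext; funext m
    show cosetMap (B (s m)) (A m) (hBA m)
      (cosetMap (A (r (s m))) (B (s m)) (hAB (s m)) (x.1 (r (s m)))) = x.1 m
    rw [cosetMap_comp (A (r (s m))) (B (s m)) (A m) (hAB (s m)) (hBA m)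
      ((hAB (s m)).trans (hBA m)) (x.1 (r (s m)))]
    exact invLim_coord A hA x ((self_le_monoMax s0 m).trans (self_le_monoMax r0 (s m))) _
  · intro y
    apply Subtype.ext; funext m
    show cosetMap (A (r m)) (B m) (hAB m)
      (cosetMap (B (s (r m))) (A (r m)) (hBA (r m)) (y.1 (s (r m)))) = y.1 m
    rw [cosetMap_comp (B (s (r m))) (A (r m)) (B m) (hBA (r m)) (hAB m)
      ((hBA (r m)).trans (hAB m)) (y.1 (s (r m)))]
    exact invLim_coord B hB y ((self_le_monoMax r0 m).trans (self_le_monoMax s0 (r m))) _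

----------------------------------------------------------------
-- conjugation homeomorphism

lemma conj_chain_desc (G : ℕ → Subgroup Γ) (hG : ∀ ℓ, G (ℓ + 1) ≤ G ℓ)
    (g : ℕ → Γ) (hg : ∀ ℓ, (g ℓ)⁻¹ * g (ℓ + 1) ∈ G ℓ) (ℓ : ℕ) :
    conjSub (g (ℓ + 1)) (G (ℓ + 1)) ≤ conjSub (g ℓ) (G ℓ) := by
  intro a ha
  rw [mem_conjSub] at ha ⊢
  have h1 : (g ℓ)⁻¹ * a * g ℓ
      = ((g ℓ)⁻¹ * g (ℓ + 1)) * ((g (ℓ + 1))⁻¹ * a * g (ℓ + 1)) * ((g ℓ)⁻¹ * g (ℓ + 1))⁻¹ := by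
    group
  rw [h1]
  exact mul_mem (mul_mem (hg ℓ) (hG ℓ ha)) (inv_mem (hg ℓ))

/-- right multiplication by `(g ℓ)⁻¹` on each coordinate -/
def conjCoordMap (g : Γ) (K : Subgroup Γ) : Γ ⧸ K → Γ ⧸ conjSub g K :=
  Quotient.map' (· * g⁻¹) fun a b hab => by
    rw [QuotientGroup.leftRel_apply] at hab ⊢
    rw [mem_conjSub]
    convert hab using 1
    group

def conjCoordInv (g : Γ) (K : Subgroup Γ) : Γ ⧸ conjSub g K → Γ ⧸ K :=
  Quotient.map' (· * g) fun a b hab => by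
    rw [QuotientGroup.leftRel_apply] at hab ⊢
    rw [mem_conjSub] at hab
    convert hab using 1
    group

lemma conj_homeo (G : ℕ → Subgroup Γ) (hG : ∀ ℓ, G (ℓ + 1) ≤ G ℓ)
    (g : ℕ → Γ) (hg : ∀ ℓ, (g ℓ)⁻¹ * g (ℓ + 1) ∈ G ℓ)
    (hG' : ∀ ℓ, conjSub (g (ℓ + 1)) (G (ℓ + 1)) ≤ conjSub (g ℓ) (G ℓ)) :
    ∃ τ : ↥(InvLimSet G hG) ≃ₜ ↥(InvLimSet (fun ℓ => conjSub (g ℓ) (G ℓ)) hG'),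
      ∀ a x, τ (limSMul G hG a x) = limSMul _ hG' a (τ x) := by
  have key : ∀ x : ↥(InvLimSet G hG), ∀ ℓ,
      cosetMap (conjSub (g (ℓ+1)) (G (ℓ+1))) (conjSub (g ℓ) (G ℓ)) (hG' ℓ)
        (conjCoordMap (g (ℓ+1)) (G (ℓ+1)) (x.1 (ℓ+1)))
      = conjCoordMap (g ℓ) (G ℓ) (x.1 ℓ) := by
    intro x ℓ
    rw [← x.2 ℓ]
    induction x.1 (ℓ+1) using Quotient.inductionOn' with
    | h a =>
      show QuotientGroup.mk (a * (g (ℓ+1))⁻¹) = QuotientGroup.mk (a * (g ℓ)⁻¹)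
      rw [QuotientGroup.eq, mem_conjSub]
      have : (g ℓ)⁻¹ * ((a * (g (ℓ + 1))⁻¹)⁻¹ * (a * (g ℓ)⁻¹)) * g ℓ
          = (g ℓ)⁻¹ * g (ℓ + 1) := by group
      rw [this]
      exact hg ℓ
  have keyInv : ∀ y : ↥(InvLimSet (fun ℓ => conjSub (g ℓ) (G ℓ)) hG'), ∀ ℓ,
      cosetMap (G (ℓ+1)) (G ℓ) (hG ℓ) (conjCoordInv (g (ℓ+1)) (G (ℓ+1)) (y.1 (ℓ+1)))
      = conjCoordInv (g ℓ) (G ℓ) (y.1 ℓ) := by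
    intro y ℓ
    rw [← y.2 ℓ]
    induction y.1 (ℓ+1) using Quotient.inductionOn' with
    | h a =>
      show QuotientGroup.mk (a * g (ℓ+1)) = QuotientGroup.mk (a * g ℓ)
      rw [QuotientGroup.eq]
      have : (a * g (ℓ + 1))⁻¹ * (a * g ℓ)
          = ((g ℓ)⁻¹ * g (ℓ + 1))⁻¹ := by group
      rw [this]
      exact inv_mem (hg ℓ)
  refine exists_homeo_of_inverse _ _ hG hG'
    (fun x => ⟨fun ℓ => conjCoordMap (g ℓ) (G ℓ) (x.1 ℓ), fun ℓ => key x ℓ⟩)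
    (fun y => ⟨fun ℓ => conjCoordInv (g ℓ) (G ℓ) (y.1 ℓ), fun ℓ => keyInv y ℓ⟩)
    (cont_coordwise _ _ hG hG' _ id _ (fun x m => rfl))
    (cont_coordwise _ _ hG' hG _ id _ (fun y m => rfl))
    ?_ ?_ ?_
  · intro a x
    apply Subtype.ext; funext ℓ
    show conjCoordMap (g ℓ) (G ℓ) (a • x.1 ℓ) = a • conjCoordMap (g ℓ) (G ℓ) (x.1 ℓ)
    induction x.1 ℓ using Quotient.inductionOn' with
    | h b =>
      show QuotientGroup.mk (a * b * (g ℓ)⁻¹) = QuotientGroup.mk (a * (b * (g ℓ)⁻¹))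
      rw [mul_assoc]
  · intro x
    apply Subtype.ext; funext ℓ
    show conjCoordInv (g ℓ) (G ℓ) (conjCoordMap (g ℓ) (G ℓ) (x.1 ℓ)) = x.1 ℓ
    induction x.1 ℓ using Quotient.inductionOn' with
    | h b =>
      show QuotientGroup.mk (b * (g ℓ)⁻¹ * g ℓ) = QuotientGroup.mk b
      rw [inv_mul_cancel_right]
  · intro y
    apply Subtype.ext; funext ℓ
    show conjCoordMap (g ℓ) (G ℓ) (conjCoordInv (g ℓ) (G ℓ) (y.1 ℓ)) = y.1 ℓ
    induction y.1 ℓ using Quotient.inductionOn' with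
    | h b =>
      show QuotientGroup.mk (b * g ℓ * (g ℓ)⁻¹) = QuotientGroup.mk b
      rw [mul_inv_cancel_right]

----------------------------------------------------------------
-- building a ChainEquiv from mutual cofinality

lemma chainEquiv_of_cofinal (A B : ℕ → Subgroup Γ)
    (hA : ∀ ℓ, A (ℓ + 1) ≤ A ℓ) (hB : ∀ ℓ, B (ℓ + 1) ≤ B ℓ)
    (h1 : ∀ m, ∃ n, B n ≤ A m) (h2 : ∀ m, ∃ n, A n ≤ B m) :
    ChainEquiv A B := by
  choose F1 hF1 using h1
  choose F2 hF2 using h2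
  -- p k = (l k, j k)
  let p : ℕ → ℕ × ℕ := fun k => Nat.rec (0, F1 0)
    (fun _ q => (max (F2 q.2) (q.1 + 1), max (F1 (max (F2 q.2) (q.1 + 1))) (q.2 + 1))) k
  refine ⟨fun k => (p k).1, fun k => (p k).2, ?_, ?_, ?_, ?_⟩
  · apply strictMono_nat_of_lt_succ
    intro k
    exact lt_of_lt_of_le (Nat.lt_succ_self _) (le_max_right _ _)
  · apply strictMono_nat_of_lt_succ
    intro k
    exact lt_of_lt_of_le (Nat.lt_succ_self _) (le_max_right _ _)
  · intro k
    cases k with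
    | zero => exact hF1 0
    | succ n =>
      show B (max (F1 _) _) ≤ A _
      exact (chain_antitone B hB (le_max_left _ _)).trans (hF1 _)
  · intro k
    show A (max (F2 (p k).2) ((p k).1 + 1)) ≤ B (p k).2
    exact (chain_antitone A hA (le_max_left _ _)).trans (hF2 _)

----------------------------------------------------------------


/-- **Theorem 4.4(2).** Let `G₀` be a finitely generated group and `{G_ℓ}`, `{H_ℓ}` group
chains in `G₀` with `G_0 = H_0 = G₀`.  Then the chains are conjugate equivalent — there is
a sequence `(g_ℓ)` in `G₀` with `g_ℓ G_ℓ = g_{ℓ+1} G_ℓ` for all `ℓ` such that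
`{g_ℓ G_ℓ g_ℓ⁻¹}` is equivalent to `{H_ℓ}` — if and only if there is a `G₀`-equivariant
homeomorphism `τ : G_∞ → H_∞` (not required to preserve basepoints). -/
theorem chain_conjugate_equiv_iff_equivariant_homeo
    {Γ : Type*} [Group Γ] (hfg : Group.FG Γ)
    (G H : ℕ → Subgroup Γ)
    (hGdesc : ∀ ℓ, G (ℓ + 1) ≤ G ℓ) (hHdesc : ∀ ℓ, H (ℓ + 1) ≤ H ℓ)
    (hGfi : ∀ ℓ, (G ℓ).FiniteIndex) (hHfi : ∀ ℓ, (H ℓ).FiniteIndex)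
    (hG0 : G 0 = ⊤) (hH0 : H 0 = ⊤) :
    (∃ g : ℕ → Γ, (∀ ℓ, (g ℓ)⁻¹ * g (ℓ + 1) ∈ G ℓ) ∧
      ChainEquiv (fun ℓ => conjSub (g ℓ) (G ℓ)) H) ↔
      ∃ τ : ↥(InvLimSet G hGdesc) ≃ₜ ↥(InvLimSet H hHdesc),
        ∀ (g : Γ) (x : ↥(InvLimSet G hGdesc)),
          τ (limSMul G hGdesc g x) = limSMul H hHdesc g (τ x) := by
  constructor
  · rintro ⟨g, hg, hCE⟩
    have hG' : ∀ ℓ, conjSub (g (ℓ + 1)) (G (ℓ + 1)) ≤ conjSub (g ℓ) (G ℓ) :=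
      conj_chain_desc G hGdesc g hg
    obtain ⟨τ1, hτ1⟩ := conj_homeo G hGdesc g hg hG'
    obtain ⟨l, j, hl, hj, h1, h2⟩ := hCE
    have c1 : ∀ m, ∃ n, conjSub (g n) (G n) ≤ H m := fun m =>
      ⟨l (m + 1), (h2 m).trans (chain_antitone H hHdesc hj.le_apply)⟩
    have c2 : ∀ m, ∃ n, H n ≤ conjSub (g m) (G m) := fun m =>
      ⟨j m, (h1 m).trans (chain_antitone (fun ℓ => conjSub (g ℓ) (G ℓ)) hG' hl.le_apply)⟩
    obtain ⟨τ2, hτ2⟩ := homeo_of_mutually_cofinal _ H hG' hHdesc c1 c2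
    refine ⟨τ1.trans τ2, fun a x => ?_⟩
    show τ2 (τ1 (limSMul G hGdesc a x)) = limSMul H hHdesc a (τ2 (τ1 x))
    rw [hτ1, hτ2]
  · rintro ⟨τ, hτ⟩
    set x : ↥(InvLimSet G hGdesc) := τ.symm (basePt H hHdesc) with hxdef
    set g : ℕ → Γ := fun ℓ => Quotient.out (x.1 ℓ) with hgdef
    have houtx : ∀ ℓ, (QuotientGroup.mk (g ℓ) : Γ ⧸ G ℓ) = x.1 ℓ := fun ℓ =>
      Quotient.out_eq' (x.1 ℓ)
    have hg : ∀ ℓ, (g ℓ)⁻¹ * g (ℓ + 1) ∈ G ℓ := by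
      intro ℓ
      have h := x.2 ℓ
      rw [← houtx (ℓ + 1), ← houtx ℓ, cosetMap_mk', QuotientGroup.eq] at h
      have h' := inv_mem h
      rwa [mul_inv_rev, inv_inv] at h'
    have memW : ∀ (a : Γ) ℓ,
        a ∈ conjSub (g ℓ) (G ℓ) ↔ (limSMul G hGdesc a x).1 ℓ = x.1 ℓ := by
      intro a ℓ
      show a ∈ conjSub (g ℓ) (G ℓ) ↔ a • x.1 ℓ = x.1 ℓ
      rw [← houtx ℓ]
      show _ ↔ (QuotientGroup.mk (a * g ℓ) : Γ ⧸ G ℓ) = QuotientGroup.mk (g ℓ)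
      rw [QuotientGroup.eq, mem_conjSub]
      have hh : (a * g ℓ)⁻¹ * g ℓ = ((g ℓ)⁻¹ * a * g ℓ)⁻¹ := by group
      rw [hh, inv_mem_iff]
    have memV : ∀ (a : Γ) jj,
        a ∈ H jj ↔ (limSMul H hHdesc a (basePt H hHdesc)).1 jj = (basePt H hHdesc).1 jj := by
      intro a jj
      show a ∈ H jj ↔ (QuotientGroup.mk (a * 1) : Γ ⧸ H jj) = QuotientGroup.mk 1
      rw [QuotientGroup.eq]
      simp [inv_mem_iff]
    have τsymm_eqv : ∀ (a : Γ) (y : ↥(InvLimSet H hHdesc)),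
        τ.symm (limSMul H hHdesc a y) = limSMul G hGdesc a (τ.symm y) := by
      intro a y
      apply τ.toEquiv.injective
      show τ (τ.symm _) = τ _
      rw [Homeomorph.apply_symm_apply, hτ, Homeomorph.apply_symm_apply]
    have claimA : ∀ jj, ∃ ℓ, conjSub (g ℓ) (G ℓ) ≤ H jj := by
      intro jj
      have hVopen : IsOpen {y : ↥(InvLimSet H hHdesc) | y.1 jj = (basePt H hHdesc).1 jj} :=
        (isOpen_discrete {(basePt H hHdesc).1 jj}).preimage (continuous_coord H hHdesc jj)
      have hUopen : IsOpen (τ ⁻¹'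
          {y : ↥(InvLimSet H hHdesc) | y.1 jj = (basePt H hHdesc).1 jj}) :=
        hVopen.preimage τ.continuous
      have hxU : x ∈ τ ⁻¹' {y : ↥(InvLimSet H hHdesc) | y.1 jj = (basePt H hHdesc).1 jj} := by
        show (τ x).1 jj = (basePt H hHdesc).1 jj
        rw [hxdef, Homeomorph.apply_symm_apply]
      obtain ⟨ℓ, hℓ⟩ := exists_basic_subset G hGdesc x _ hUopen hxU
      refine ⟨ℓ, fun a ha => ?_⟩
      have h1 := hℓ _ ((memW a ℓ).mp ha)
      rw [Set.mem_preimage, hτ] at h1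
      have h2 : (limSMul H hHdesc a (τ x)).1 jj = (basePt H hHdesc).1 jj := h1
      rw [hxdef, Homeomorph.apply_symm_apply] at h2
      exact (memV a jj).mpr h2
    have claimB : ∀ ℓ, ∃ jj, H jj ≤ conjSub (g ℓ) (G ℓ) := by
      intro ℓ
      have hWopen : IsOpen {z : ↥(InvLimSet G hGdesc) | z.1 ℓ = x.1 ℓ} :=
        (isOpen_discrete {x.1 ℓ}).preimage (continuous_coord G hGdesc ℓ)
      have hUopen : IsOpen (τ.symm ⁻¹' {z : ↥(InvLimSet G hGdesc) | z.1 ℓ = x.1 ℓ}) :=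
        hWopen.preimage τ.symm.continuous
      have hbU : basePt H hHdesc ∈ τ.symm ⁻¹' {z : ↥(InvLimSet G hGdesc) | z.1 ℓ = x.1 ℓ} := by
        show (τ.symm (basePt H hHdesc)).1 ℓ = x.1 ℓ
        rw [← hxdef]
      obtain ⟨jj, hjj⟩ := exists_basic_subset H hHdesc (basePt H hHdesc) _ hUopen hbU
      refine ⟨jj, fun a ha => ?_⟩
      have h1 := hjj _ ((memV a jj).mp ha)
      rw [Set.mem_preimage, τsymm_eqv] at h1
      have h2 : (limSMul G hGdesc a (τ.symm (basePt H hHdesc))).1 ℓ = x.1 ℓ := h1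
      rw [← hxdef] at h2
      exact (memW a ℓ).mpr h2
    have hG'desc : ∀ ℓ, conjSub (g (ℓ + 1)) (G (ℓ + 1)) ≤ conjSub (g ℓ) (G ℓ) := by
      intro ℓ a ha
      have h1 := (memW a (ℓ + 1)).mp ha
      exact (memW a ℓ).mpr (coord_eq_of_le G hGdesc x _ (Nat.le_succ ℓ) h1)
    exact ⟨g, hg, chainEquiv_of_cofinal _ H hG'desc hHdesc claimB claimA⟩
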